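/- Let F : E → ℝ be convex, differentiable, and β-smooth, let w* be a global minimizer of F, and let 0 < η ≤ 1/β. Then one gradient-descent step does not increase the distance to the minimizer: ‖(v − η∇F(v)) − w*‖ ≤ ‖v − w*‖ for every v ∈ E. -/

import Mathlib

open InnerProductSpace

section aux
variable {E : Type*} [NormedAddCommGroup E] [InnerProductSpace ℝ E] [CompleteSpace E]

lemma gd_line_deriv (F : E → ℝ) (hdiff : Differentiable ℝ F) (x u : E) (t : ℝ) :
    HasDerivAt (fun s : ℝ => F (x + s • u)) ⟪gradient F (x + t • u), u⟫_ℝ t := by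
  have h1 : HasDerivAt (fun s : ℝ => x + s • u) u t := by
    simpa using ((hasDerivAt_id t).smul_const u).const_add x
  have h2 := (hdiff (x + t • u)).hasGradientAt.hasFDerivAt
  have h3 := h2.comp_hasDerivAt t h1
  simpa [InnerProductSpace.toDual_apply_apply, Function.comp_def] using h3

lemma gd_first_order (F : E → ℝ) (hdiff : Differentiable ℝ F)
    (hconv : ConvexOn ℝ Set.univ F) (x y : E) :
    F x + ⟪gradient F x, y - x⟫_ℝ ≤ F y := by
  set u := y - x
  have hφ : ConvexOn ℝ Set.univ (fun s : ℝ => F (x + s • u)) := by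
    have := hconv.comp_affineMap (AffineMap.lineMap x y : ℝ →ᵃ[ℝ] E)
    simp only [Set.preimage_univ] at this
    have h' : (fun s : ℝ => F (x + s • u)) = F ∘ (AffineMap.lineMap x y : ℝ →ᵃ[ℝ] E) := by
      funext s
      simp [AffineMap.lineMap_apply, u, add_comm]
    rw [h']; exact this
  have hd := gd_line_deriv F hdiff x u 0
  simp only [zero_smul, add_zero] at hd
  have hslope := hφ.le_slope_of_hasDerivAt (Set.mem_univ (0:ℝ)) (Set.mem_univ (1:ℝ))
    one_pos hd
  simp only [slope_def_field, div_one] at hslope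
  have : ⟪gradient F x, u⟫_ℝ ≤ F (x + (1:ℝ) • u) - F (x + (0:ℝ) • u) := by
    simpa [slope, zero_smul, add_zero] using hslope
  simp only [one_smul, zero_smul, add_zero, u] at this
  have hy : x + (y - x) = y := by abel
  rw [hy] at this
  linarith

lemma gd_descent (F : E → ℝ) (β : ℝ) (hβ : 0 < β) (hdiff : Differentiable ℝ F)
    (hsmooth : ∀ w w' : E, ‖gradient F w - gradient F w'‖ ≤ β * ‖w - w'‖)
    (x h : E) :
    F (x + h) ≤ F x + ⟪gradient F x, h⟫_ℝ + β / 2 * ‖h‖ ^ 2 := by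
  have hgcont : Continuous (gradient F) := by
    have : LipschitzWith β.toNNReal (gradient F) := by
      refine LipschitzWith.of_dist_le_mul fun a b => ?_
      rw [dist_eq_norm, dist_eq_norm]
      simpa [Real.coe_toNNReal _ hβ.le] using hsmooth a b
    exact this.continuous
  set ψ : ℝ → ℝ := fun t => ⟪gradient F (x + t • h), h⟫_ℝ with hψ
  have hψcont : Continuous ψ := by
    apply Continuous.inner
    · exact hgcont.comp (by continuity)
    · exact continuous_const
  have hFTC : ∫ t in (0:ℝ)..1, ψ t = F (x + h) - F x := by
    have := intervalIntegral.integral_eq_sub_of_hasDerivAt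
      (f := fun s : ℝ => F (x + s • h)) (f' := ψ)
      (fun t _ => gd_line_deriv F hdiff x h t) (hψcont.intervalIntegrable 0 1)
    simpa using this
  have hbound : ∫ t in (0:ℝ)..1, ψ t ≤ ∫ t in (0:ℝ)..1, (⟪gradient F x, h⟫_ℝ + β * t * ‖h‖ ^ 2) := by
    apply intervalIntegral.integral_mono_on zero_le_one
      (hψcont.intervalIntegrable 0 1)
      (by apply Continuous.intervalIntegrable; continuity)
    intro t ht
    have h1 : ψ t - ⟪gradient F x, h⟫_ℝ = ⟪gradient F (x + t • h) - gradient F x, h⟫_ℝ := by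
      simp [ψ, inner_sub_left]
    have h2 : ⟪gradient F (x + t • h) - gradient F x, h⟫_ℝ ≤ β * t * ‖h‖ ^ 2 := by
      calc ⟪gradient F (x + t • h) - gradient F x, h⟫_ℝ
          ≤ ‖gradient F (x + t • h) - gradient F x‖ * ‖h‖ := real_inner_le_norm _ _
        _ ≤ (β * ‖(x + t • h) - x‖) * ‖h‖ := by
            gcongr; exact hsmooth _ _
        _ = β * (|t| * ‖h‖) * ‖h‖ := by simp [norm_smul]
        _ = β * t * ‖h‖ ^ 2 := by
            rw [abs_of_nonneg ht.1]; ring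
    linarith [h1 ▸ h2]
  have hval : ∫ t in (0:ℝ)..1, (⟪gradient F x, h⟫_ℝ + β * t * ‖h‖ ^ 2)
      = ⟪gradient F x, h⟫_ℝ + β / 2 * ‖h‖ ^ 2 := by
    rw [intervalIntegral.integral_add (by apply Continuous.intervalIntegrable; continuity)
      (by apply Continuous.intervalIntegrable; continuity)]
    simp only [intervalIntegral.integral_const, smul_eq_mul, sub_zero, one_mul]
    have : ∫ t in (0:ℝ)..1, β * t * ‖h‖ ^ 2 = β / 2 * ‖h‖ ^ 2 := by
      have : (fun t : ℝ => β * t * ‖h‖ ^ 2) = fun t : ℝ => (β * ‖h‖ ^ 2) * t := by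
        funext t; ring
      rw [this, intervalIntegral.integral_const_mul, integral_id]
      ring
    rw [this]
  linarith [hFTC ▸ hbound, hval ▸ (hFTC ▸ hbound)]

end aux

/-- Lemma: distance to minimizer non-increasing: Let `F : E → ℝ` be convex,
differentiable, and β-smooth, let `w*` be a global minimizer of `F`, and let
`0 < η ≤ 1/β`.  Then one gradient-descent step does not increase the distance to the
minimizer: `‖(v - η • ∇F(v)) - w*‖ ≤ ‖v - w*‖` for every `v`. -/
theorem gradient_step_dist_to_min_nonincreasing
    {E : Type*} [NormedAddCommGroup E] [InnerProductSpace ℝ E] [CompleteSpace E]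
    (F : E → ℝ) (β η : ℝ) (wstar : E)
    (hβ : 0 < β) (hη0 : 0 < η) (hη : η ≤ 1 / β)
    (hdiff : Differentiable ℝ F)
    (hconv : ConvexOn ℝ Set.univ F)
    (hsmooth : ∀ w w' : E, ‖gradient F w - gradient F w'‖ ≤ β * ‖w - w'‖)
    (hstar : ∀ w : E, F wstar ≤ F w) :
    ∀ v : E, ‖(v - η • gradient F v) - wstar‖ ≤ ‖v - wstar‖ := by
  intro v
  set g := gradient F v with hg
  have hdesc := gd_descent F β hβ hdiff hsmooth v (-(1/β) • g)
  have h1 : ⟪g, -(1/β) • g⟫_ℝ = -(1/β) * ‖g‖ ^ 2 := by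
    rw [real_inner_smul_right, real_inner_self_eq_norm_sq]
  have h2 : ‖-(1/β) • g‖ ^ 2 = (1/β)^2 * ‖g‖ ^ 2 := by
    rw [norm_smul, Real.norm_eq_abs, abs_neg, abs_of_pos (show (0:ℝ) < 1/β by positivity)]
    ring
  rw [h1, h2] at hdesc
  have hmin := hstar (v + -(1/β) • g)
  have hfo := gd_first_order F hdiff hconv v wstar
  have hkey : 1/(2*β) * ‖g‖ ^ 2 ≤ ⟪g, v - wstar⟫_ℝ := by
    have hsub : ⟪g, wstar - v⟫_ℝ = -⟪g, v - wstar⟫_ℝ := by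
      rw [← inner_neg_right]; congr 1; abel
    rw [hsub] at hfo
    have hsimp : -(1/β) * ‖g‖ ^ 2 + β/2 * ((1/β)^2 * ‖g‖ ^ 2) = -(1/(2*β)) * ‖g‖ ^ 2 := by
      field_simp; ring
    linarith
  have hsq : ‖(v - η • g) - wstar‖ ^ 2 ≤ ‖v - wstar‖ ^ 2 := by
    have hexp : (v - η • g) - wstar = (v - wstar) - η • g := by abel
    rw [hexp, norm_sub_sq_real, real_inner_smul_right, norm_smul, Real.norm_eq_abs,
      abs_of_pos hη0, real_inner_comm g (v - wstar)]
    have e1 : 2 * η * (1/(2*β) * ‖g‖ ^ 2) = η/β * ‖g‖ ^ 2 := by field_simp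
    have e2 : (η * ‖g‖) ^ 2 ≤ η/β * ‖g‖ ^ 2 := by
      have h3 : η * η ≤ η * (1/β) := mul_le_mul_of_nonneg_left hη hη0.le
      have h4 : η * η * ‖g‖ ^ 2 ≤ η * (1/β) * ‖g‖ ^ 2 :=
        mul_le_mul_of_nonneg_right h3 (sq_nonneg _)
      calc (η * ‖g‖) ^ 2 = η * η * ‖g‖ ^ 2 := by ring
        _ ≤ η * (1/β) * ‖g‖ ^ 2 := h4
        _ = η/β * ‖g‖ ^ 2 := by ring
    have h5 : 2 * η * (1/(2*β) * ‖g‖ ^ 2) ≤ 2 * η * ⟪g, v - wstar⟫_ℝ :=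
      mul_le_mul_of_nonneg_left hkey (by positivity)
    nlinarith
  nlinarith [hsq, norm_nonneg ((v - η • g) - wstar), norm_nonneg (v - wstar)]
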